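/- Let x ∈ ℝ^d be such that p(x,·) is a probability density with finite third moment M₃(x) = ∫‖h‖³ p(x,h) dh and p(x,−h)=p(x,h) for all h, and such that g is differentiable in its first variable at (x,x). Set C(x) = inf over unit vectors u,v ∈ ℝ^d of ∫_{ℝ^d} |h·u|²|h·v| p(x,h) dh. Then for all s ∈ ℝ^d: (1/2) C(x) ‖s‖² ‖∇₁g(x,x)‖ ≤ sᵀ a(x) s ≤ (1/2) M₃(x) ‖s‖² ‖∇₁g(x,x)‖. -/

import Mathlib

open MeasureTheory Real Set
open scoped RealInnerProductSpace ENNReal NNReal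

noncomputable section

abbrev Euc (d : ℕ) := EuclideanSpace ℝ (Fin d)

variable {d : ℕ}

/-- gradient of `g` with respect to its first variable -/
def grad1 (g : Euc d → Euc d → ℝ) (y x : Euc d) : Euc d :=
  gradient (fun z => g z x) y

/-- Hessian of `g` with respect to its first variable, as a continuous bilinear map -/
def hess11 (g : Euc d → Euc d → ℝ) (y x : Euc d) : Euc d →L[ℝ] Euc d →L[ℝ] ℝ :=
  fderiv ℝ (fderiv ℝ (fun z => g z x)) y

/-- set of evolutionary singularities -/
def Gam (g : Euc d → Euc d → ℝ) : Set (Euc d) := {x | grad1 g x x = 0}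

def GamAlpha (g : Euc d → Euc d → ℝ) (α : ℝ) : Set (Euc d) :=
  {x | α ≤ Metric.infDist x (Gam g) ∧ ‖x‖ ≤ 1 / α}

/-- `p` is a measurable symmetric probability-density kernel -/
def IsMutKernel (p : Euc d → Euc d → ℝ) : Prop :=
  Measurable (Function.uncurry p) ∧
  (∀ x h, 0 ≤ p x h) ∧
  (∀ x, Integrable (fun h => p x h)) ∧
  (∀ x, (∫ h, p x h) = 1) ∧
  (∀ x h, p x (-h) = p x h)

/-- Assumption (H2) -/
def H2 (p : Euc d → Euc d → ℝ) : Prop :=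
  (∀ x, Integrable (fun h : Euc d => ‖h‖ ^ 3 * p x h)) ∧
  (∃ M : ℝ, ∀ x, (∫ h : Euc d, ‖h‖ ^ 3 * p x h) ≤ M) ∧
  ∃ m : ℝ → ℝ, Measurable m ∧ (∀ r, 0 ≤ m r) ∧
    Integrable (fun h : Euc d => (‖h‖ ^ 2 ⊔ ‖h‖ ^ 3) * m ‖h‖) ∧
    (∀ x y h, |p x h - p y h| ≤ ‖x - y‖ * m ‖h‖) ∧
    (∀ x h, p x h ≤ m ‖h‖)

/-- Assumption (H1) -/
def H1 (g : Euc d → Euc d → ℝ) : Prop :=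
  (∀ x : Euc d, ContDiff ℝ 2 (fun z => g z x)) ∧
  (∃ C : ℝ, ∀ y x : Euc d, ‖grad1 g y x‖ ≤ C) ∧
  (∃ K : ℝ≥0, LipschitzWith K (fun q : Euc d × Euc d => grad1 g q.1 q.2)) ∧
  (∃ C : ℝ, ∀ y x : Euc d, ‖hess11 g y x‖ ≤ C) ∧
  (∃ K : ℝ≥0, LipschitzWith K (fun q : Euc d × Euc d => hess11 g q.1 q.2))

/-- drift coefficient b -/
def bCoeff (g p : Euc d → Euc d → ℝ) (x : Euc d) : Euc d :=
  (WithLp.equiv 2 (Fin d → ℝ)).symm fun k =>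
    ∫ h : Euc d, h k * max (⟪grad1 g x x, h⟫) 0 * p x h

/-- diffusion matrix a -/
def aMat (g p : Euc d → Euc d → ℝ) (x : Euc d) : Matrix (Fin d) (Fin d) ℝ :=
  Matrix.of fun k l => ∫ h : Euc d, h k * h l * max (⟪h, grad1 g x x⟫) 0 * p x h

/-- second-order drift coefficient b-tilde -/
def btCoeff (g p : Euc d → Euc d → ℝ) (x : Euc d) : Euc d :=
  (WithLp.equiv 2 (Fin d → ℝ)).symm fun k =>
    (1 / 2) * ∫ h in {h : Euc d | 0 < ⟪h, grad1 g x x⟫},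
      h k * hess11 g x x h h * p x h

/-- quadratic form sᵀ a(x) s -/
def quadA (g p : Euc d → Euc d → ℝ) (x s : Euc d) : ℝ :=
  ∑ k, ∑ l, s k * aMat g p x k l * s l

/-- quadratic form sᵀ a(x)⁻¹ s -/
def quadAInv (g p : Euc d → Euc d → ℝ) (x s : Euc d) : ℝ :=
  ∑ k, ∑ l, s k * (aMat g p x)⁻¹ k l * s l

/-- full Hessian of `g` (as a function on the product space) at `(y,x)` -/
def hessF (g : Euc d → Euc d → ℝ) (y x : Euc d) :
    (Euc d × Euc d) →L[ℝ] (Euc d × Euc d) →L[ℝ] ℝ :=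
  fderiv ℝ (fderiv ℝ (fun q : Euc d × Euc d => g q.1 q.2)) (y, x)

/-- action of a matrix on a vector of `Euc d` -/
def mulVecE (M : Matrix (Fin d) (Fin d) ℝ) (v : Euc d) : Euc d :=
  (WithLp.equiv 2 (Fin d → ℝ)).symm (M.mulVec (WithLp.equiv 2 (Fin d → ℝ) v))

/-- auxiliary -/
lemma aux_abs_apply_le (h : Euc d) (k : Fin d) : |h k| ≤ ‖h‖ := by
  have := abs_real_inner_le_norm h (EuclideanSpace.single k (1:ℝ))
  simpa [EuclideanSpace.inner_single_right] using this

theorem stmt7 {d : ℕ} (hd : 1 ≤ d) (g p : Euc d → Euc d → ℝ) (x : Euc d)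
    (hmeas : Measurable (fun h : Euc d => p x h))
    (hpos : ∀ h : Euc d, 0 ≤ p x h)
    (hint : Integrable (fun h : Euc d => p x h))
    (hone : (∫ h : Euc d, p x h) = 1)
    (hmom : Integrable (fun h : Euc d => ‖h‖ ^ 3 * p x h))
    (hsymm : ∀ h : Euc d, p x (-h) = p x h)
    (hdiff : DifferentiableAt ℝ (fun z => g z x) x) :
    ∀ s : Euc d,
      (1 / 2) * (⨅ uv : Metric.sphere (0 : Euc d) 1 × Metric.sphere (0 : Euc d) 1,
          ∫ h : Euc d, |⟪h, (uv.1 : Euc d)⟫| ^ 2 * |⟪h, (uv.2 : Euc d)⟫| * p x h)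
          * ‖s‖ ^ 2 * ‖grad1 g x x‖ ≤ quadA g p x s ∧
      quadA g p x s ≤
        (1 / 2) * (∫ h : Euc d, ‖h‖ ^ 3 * p x h) * ‖s‖ ^ 2 * ‖grad1 g x x‖ := by
  intro s
  set G := grad1 g x x with hGdef
  -- measurability helpers
  have hmI : ∀ v : Euc d, Measurable fun h : Euc d => ⟪h, v⟫ := fun v =>
    (continuous_id.inner continuous_const).measurable
  have hmk : ∀ k : Fin d, Measurable fun h : Euc d => h k := by
    intro k
    have : (fun h : Euc d => h k) = fun h : Euc d => ⟪h, EuclideanSpace.single k (1:ℝ)⟫ := by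
      funext h; simp [EuclideanSpace.inner_single_right]
    rw [this]; exact hmI _
  -- generic integrability
  have intg : ∀ (f : Euc d → ℝ) (C : ℝ), Measurable f → (∀ h, |f h| ≤ C * ‖h‖ ^ 3) →
      Integrable (fun h : Euc d => f h * p x h) := by
    intro f C hf hb
    refine Integrable.mono' (hmom.const_mul C) ((hf.mul hmeas).aestronglyMeasurable) ?_
    filter_upwards with h
    have h1 : |f h * p x h| = |f h| * p x h := by rw [abs_mul, abs_of_nonneg (hpos h)]
    rw [Real.norm_eq_abs, h1]
    calc |f h| * p x h ≤ (C * ‖h‖ ^ 3) * p x h :=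
          mul_le_mul_of_nonneg_right (hb h) (hpos h)
      _ = C * (‖h‖ ^ 3 * p x h) := by ring
  have habsmax : ∀ t : ℝ, |max t 0| ≤ |t| := by
    intro t
    rw [abs_of_nonneg (le_max_right _ _)]
    exact max_le (le_abs_self t) (abs_nonneg t)
  -- integrability instances
  have intkl : ∀ k l : Fin d,
      Integrable (fun h : Euc d => h k * h l * max ⟪h, G⟫ 0 * p x h) := by
    intro k l
    refine intg _ ‖G‖ (((hmk k).mul (hmk l)).mul ((hmI G).max measurable_const)) fun h => ?_
    rw [abs_mul, abs_mul]
    calc |h k| * |h l| * |max ⟪h, G⟫ 0| ≤ ‖h‖ * ‖h‖ * (‖h‖ * ‖G‖) := by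
          gcongr
          · exact aux_abs_apply_le h k
          · exact aux_abs_apply_le h l
          · exact (habsmax _).trans (abs_real_inner_le_norm h G)
      _ = ‖G‖ * ‖h‖ ^ 3 := by ring
  have bnds : ∀ h : Euc d, ∀ t : ℝ, |t| ≤ ‖h‖ * ‖G‖ →
      |⟪h, s⟫ ^ 2 * t| ≤ ‖s‖ ^ 2 * ‖G‖ * ‖h‖ ^ 3 := by
    intro h t ht
    rw [abs_mul, abs_sq]
    have h1 : ⟪h, s⟫ ^ 2 ≤ (‖h‖ * ‖s‖) ^ 2 := by
      rw [← sq_abs]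
      exact pow_le_pow_left₀ (abs_nonneg _) (abs_real_inner_le_norm h s) 2
    calc ⟪h, s⟫ ^ 2 * |t| ≤ (‖h‖ * ‖s‖) ^ 2 * (‖h‖ * ‖G‖) := by
          have h0 : (0:ℝ) ≤ ⟪h, s⟫ ^ 2 := sq_nonneg _
          have := mul_le_mul h1 ht (abs_nonneg t) (by positivity)
          exact this
      _ = ‖s‖ ^ 2 * ‖G‖ * ‖h‖ ^ 3 := by ring
  have int1 : Integrable (fun h : Euc d => ⟪h, s⟫ ^ 2 * max ⟪h, G⟫ 0 * p x h) := by
    have : (fun h : Euc d => ⟪h, s⟫ ^ 2 * max ⟪h, G⟫ 0 * p x h)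
        = fun h => (⟪h, s⟫ ^ 2 * max ⟪h, G⟫ 0) * p x h := by funext h; ring
    rw [this]
    exact intg _ (‖s‖ ^ 2 * ‖G‖) (((hmI s).pow_const 2).mul ((hmI G).max measurable_const))
      fun h => bnds h _ ((habsmax _).trans (abs_real_inner_le_norm h G))
  have int2 : Integrable (fun h : Euc d => ⟪h, s⟫ ^ 2 * max (-⟪h, G⟫) 0 * p x h) := by
    have : (fun h : Euc d => ⟪h, s⟫ ^ 2 * max (-⟪h, G⟫) 0 * p x h)
        = fun h => (⟪h, s⟫ ^ 2 * max (-⟪h, G⟫) 0) * p x h := by funext h; ring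
    rw [this]
    exact intg _ (‖s‖ ^ 2 * ‖G‖) (((hmI s).pow_const 2).mul (((hmI G).neg).max measurable_const))
      fun h => bnds h _ ((habsmax _).trans (by rw [abs_neg]; exact abs_real_inner_le_norm h G))
  have int3 : Integrable (fun h : Euc d => ⟪h, s⟫ ^ 2 * |⟪h, G⟫| * p x h) := by
    have : (fun h : Euc d => ⟪h, s⟫ ^ 2 * |⟪h, G⟫| * p x h)
        = fun h => (⟪h, s⟫ ^ 2 * |⟪h, G⟫|) * p x h := by funext h; ring
    rw [this]
    exact intg _ (‖s‖ ^ 2 * ‖G‖) (((hmI s).pow_const 2).mul (hmI G).abs)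
      fun h => bnds h _ (by rw [abs_abs]; exact abs_real_inner_le_norm h G)
  -- Step A : quadA as a single integral
  have hA : quadA g p x s = ∫ h : Euc d, ⟪h, s⟫ ^ 2 * max ⟪h, G⟫ 0 * p x h := by
    have step1 : quadA g p x s
        = ∑ k, ∑ l, ∫ h : Euc d, s k * (h k * h l * max ⟪h, G⟫ 0 * p x h) * s l := by
      unfold quadA aMat
      refine Finset.sum_congr rfl fun k _ => Finset.sum_congr rfl fun l _ => ?_
      rw [Matrix.of_apply, ← hGdef, ← integral_const_mul, ← integral_mul_const]
    rw [step1]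
    have step2 : ∑ k, ∑ l, (∫ h : Euc d, s k * (h k * h l * max ⟪h, G⟫ 0 * p x h) * s l)
        = ∫ h : Euc d, ∑ k, ∑ l, s k * (h k * h l * max ⟪h, G⟫ 0 * p x h) * s l := by
      calc ∑ k, ∑ l, (∫ h : Euc d, s k * (h k * h l * max ⟪h, G⟫ 0 * p x h) * s l)
          = ∑ k, ∫ h : Euc d, ∑ l, s k * (h k * h l * max ⟪h, G⟫ 0 * p x h) * s l :=
            Finset.sum_congr rfl fun k _ => (integral_finset_sum _ fun l _ =>
              (((intkl k l).const_mul (s k)).mul_const (s l))).symm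
        _ = ∫ h : Euc d, ∑ k, ∑ l, s k * (h k * h l * max ⟪h, G⟫ 0 * p x h) * s l :=
            (integral_finset_sum _ fun k _ => integrable_finset_sum _ fun l _ =>
              ((intkl k l).const_mul (s k)).mul_const (s l)).symm
    rw [step2]
    refine integral_congr_ae (Filter.Eventually.of_forall fun h => ?_)
    beta_reduce
    have hin : ⟪h, s⟫ = ∑ k, h k * s k := by
      simp [PiLp.inner_apply, RCLike.inner_apply, conj_trivial, mul_comm]
    rw [hin, sq, Finset.sum_mul_sum, Finset.sum_mul, Finset.sum_mul]
    refine Finset.sum_congr rfl fun k _ => ?_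
    rw [Finset.sum_mul, Finset.sum_mul]
    exact Finset.sum_congr rfl fun l _ => by ring
  -- Step B : symmetry
  have hsymI : (∫ h : Euc d, ⟪h, s⟫ ^ 2 * max ⟪h, G⟫ 0 * p x h)
      = ∫ h : Euc d, ⟪h, s⟫ ^ 2 * max (-⟪h, G⟫) 0 * p x h := by
    rw [← integral_neg_eq_self (fun h : Euc d => ⟪h, s⟫ ^ 2 * max ⟪h, G⟫ 0 * p x h) volume]
    refine integral_congr_ae (Filter.Eventually.of_forall fun h => ?_)
    simp only [inner_neg_left, hsymm, neg_sq]
  have hB : (∫ h : Euc d, ⟪h, s⟫ ^ 2 * max ⟪h, G⟫ 0 * p x h)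
      = (1 / 2) * ∫ h : Euc d, ⟪h, s⟫ ^ 2 * |⟪h, G⟫| * p x h := by
    have hsum : (∫ h : Euc d, ⟪h, s⟫ ^ 2 * max ⟪h, G⟫ 0 * p x h)
        + (∫ h : Euc d, ⟪h, s⟫ ^ 2 * max (-⟪h, G⟫) 0 * p x h)
        = ∫ h : Euc d, ⟪h, s⟫ ^ 2 * |⟪h, G⟫| * p x h := by
      rw [← integral_add int1 int2]
      refine integral_congr_ae (Filter.Eventually.of_forall fun h => ?_)
      have : max ⟪h, G⟫ 0 + max (-⟪h, G⟫) 0 = |⟪h, G⟫| := by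
        rcases le_or_gt 0 ⟪h, G⟫ with ht | ht
        · rw [max_eq_left ht, max_eq_right (neg_nonpos.mpr ht), add_zero, abs_of_nonneg ht]
        · rw [max_eq_right ht.le, max_eq_left (neg_nonneg.mpr ht.le), zero_add,
            abs_of_neg ht]
      calc ⟪h, s⟫ ^ 2 * max ⟪h, G⟫ 0 * p x h + ⟪h, s⟫ ^ 2 * max (-⟪h, G⟫) 0 * p x h
          = ⟪h, s⟫ ^ 2 * (max ⟪h, G⟫ 0 + max (-⟪h, G⟫) 0) * p x h := by ring
        _ = ⟪h, s⟫ ^ 2 * |⟪h, G⟫| * p x h := by rw [this]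
    linarith [hsymI, hsum]
  set J := ∫ h : Euc d, ⟪h, s⟫ ^ 2 * |⟪h, G⟫| * p x h with hJdef
  have hquad : quadA g p x s = (1 / 2) * J := by rw [hA, hB]
  have hJ0 : 0 ≤ J := integral_nonneg fun h =>
    mul_nonneg (mul_nonneg (sq_nonneg _) (abs_nonneg _)) (hpos h)
  -- infimum
  set F : Metric.sphere (0 : Euc d) 1 × Metric.sphere (0 : Euc d) 1 → ℝ := fun uv =>
    ∫ h : Euc d, |⟪h, (uv.1 : Euc d)⟫| ^ 2 * |⟪h, (uv.2 : Euc d)⟫| * p x h with hFdef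
  have hFnn : ∀ uv, 0 ≤ F uv := fun uv => integral_nonneg fun h =>
    mul_nonneg (mul_nonneg (by positivity) (abs_nonneg _)) (hpos h)
  have hbdd : BddBelow (Set.range F) := ⟨0, by rintro y ⟨uv, rfl⟩; exact hFnn uv⟩
  have hInf0 : 0 ≤ ⨅ uv, F uv := Real.iInf_nonneg hFnn
  constructor
  · -- lower bound
    by_cases hz : ‖s‖ ^ 2 * ‖G‖ = 0
    · calc (1 / 2) * (⨅ uv, F uv) * ‖s‖ ^ 2 * ‖G‖
          = (1 / 2) * (⨅ uv, F uv) * (‖s‖ ^ 2 * ‖G‖) := by ring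
        _ = 0 := by rw [hz, mul_zero]
        _ ≤ quadA g p x s := by rw [hquad]; linarith
    · have hs0 : s ≠ 0 := by
        intro h; apply hz; rw [h, norm_zero]; ring
      have hG0 : G ≠ 0 := by
        intro h; apply hz; rw [h, norm_zero]; ring
      have hsn : (0:ℝ) < ‖s‖ := norm_pos_iff.mpr hs0
      have hGn : (0:ℝ) < ‖G‖ := norm_pos_iff.mpr hG0
      have humem : (‖s‖⁻¹ • s) ∈ Metric.sphere (0 : Euc d) 1 := by
        rw [mem_sphere_zero_iff_norm, norm_smul, norm_inv, norm_norm,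
          inv_mul_cancel₀ hsn.ne']
      have hvmem : (‖G‖⁻¹ • G) ∈ Metric.sphere (0 : Euc d) 1 := by
        rw [mem_sphere_zero_iff_norm, norm_smul, norm_inv, norm_norm,
          inv_mul_cancel₀ hGn.ne']
      have hle : (⨅ uv, F uv) ≤ F (⟨_, humem⟩, ⟨_, hvmem⟩) := ciInf_le hbdd _
      have hval : F (⟨_, humem⟩, ⟨_, hvmem⟩) = (‖s‖ ^ 2 * ‖G‖)⁻¹ * J := by
        rw [hFdef, hJdef, ← integral_const_mul]
        refine integral_congr_ae (Filter.Eventually.of_forall fun h => ?_)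
        simp only
        rw [real_inner_smul_right, real_inner_smul_right, abs_mul, abs_mul,
          abs_of_pos (inv_pos.mpr hsn), abs_of_pos (inv_pos.mpr hGn), mul_pow, sq_abs]
        field_simp
      have h' : (⨅ uv, F uv) * (‖s‖ ^ 2 * ‖G‖) ≤ J := by
        have h2 := mul_le_mul_of_nonneg_right (hval ▸ hle) (by positivity :
          (0:ℝ) ≤ ‖s‖ ^ 2 * ‖G‖)
        calc (⨅ uv, F uv) * (‖s‖ ^ 2 * ‖G‖)
            ≤ (‖s‖ ^ 2 * ‖G‖)⁻¹ * J * (‖s‖ ^ 2 * ‖G‖) := h2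
          _ = J := by field_simp
      calc (1 / 2) * (⨅ uv, F uv) * ‖s‖ ^ 2 * ‖G‖
          = (1 / 2) * ((⨅ uv, F uv) * (‖s‖ ^ 2 * ‖G‖)) := by ring
        _ ≤ (1 / 2) * J := by linarith
        _ = quadA g p x s := hquad.symm
  · -- upper bound
    have hup : J ≤ ‖s‖ ^ 2 * ‖G‖ * ∫ h : Euc d, ‖h‖ ^ 3 * p x h := by
      rw [hJdef, ← integral_const_mul]
      refine integral_mono int3 (hmom.const_mul _) fun h => ?_
      calc ⟪h, s⟫ ^ 2 * |⟪h, G⟫| * p x h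
          ≤ (‖s‖ ^ 2 * ‖G‖ * ‖h‖ ^ 3) * p x h := by
            refine mul_le_mul_of_nonneg_right ?_ (hpos h)
            have := bnds h |⟪h, G⟫| (by rw [abs_abs]; exact abs_real_inner_le_norm h G)
            rwa [abs_mul, abs_sq, abs_abs] at this
        _ = ‖s‖ ^ 2 * ‖G‖ * (‖h‖ ^ 3 * p x h) := by ring
    rw [hquad]
    calc (1 / 2) * J ≤ (1 / 2) * (‖s‖ ^ 2 * ‖G‖ * ∫ h : Euc d, ‖h‖ ^ 3 * p x h) := by
          linarith
      _ = (1 / 2) * (∫ h : Euc d, ‖h‖ ^ 3 * p x h) * ‖s‖ ^ 2 * ‖G‖ := by ring
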